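/- Let B be a bicategory and G : a ⟶ b a 1-morphism. Suppose: (1) the functor g_b : Hom(b,a) ⥤ Hom(b,b) given by J ↦ J ≫ G admits a right adjoint h_b; (2) the functor g_a : Hom(a,a) ⥤ Hom(a,b) given by K ↦ K ≫ G admits a right adjoint h_a; and (3) the canonical 2-morphism G ≫ h_b(𝟙 b) ⟶ h_a(G) (adjoint under g_a ⊣ h_a to the 2-morphism (G ≫ h_b(𝟙 b)) ≫ G ⟶ G induced by the counit (h_b(𝟙 b)) ≫ G ⟶ 𝟙 b of g_b ⊣ h_b) induces a bijection on 2-morphisms out of 𝟙 a, i.e., the induced map from 2-morphisms 𝟙 a ⟶ G ≫ h_b(𝟙 b) to 2-morphisms 𝟙 a ⟶ h_a(G) is a bijection. Then G admits a right adjoint in B, given by H := h_b(𝟙 b), with counit the counit of g_b ⊣ h_b at 𝟙 b and unit the 2-morphism 𝟙 a ⟶ G ≫ H corresponding under condition (3) to the unit of g_a ⊣ h_a at 𝟙 a. -/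

import Mathlib

open CategoryTheory Bicategory

variable {B : Type*} [Bicategory B]

/-- The canonical 2-morphism `G ≫ h_b(𝟙 b) ⟶ h_a(G)`, adjoint under `g_a ⊣ h_a` to the
2-morphism `(G ≫ h_b(𝟙 b)) ≫ G ⟶ G` induced by the counit of `g_b ⊣ h_b` at `𝟙 b`. -/
noncomputable def canonicalComparison {a b : B} (G : a ⟶ b)
    (hB : (b ⟶ b) ⥤ (b ⟶ a)) (adjB : Bicategory.postcomp b G ⊣ hB)
    (hA : (a ⟶ b) ⥤ (a ⟶ a)) (adjA : Bicategory.postcomp a G ⊣ hA) :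
    G ≫ hB.obj (𝟙 b) ⟶ hA.obj G :=
  adjA.homEquiv (G ≫ hB.obj (𝟙 b)) G
    ((α_ G (hB.obj (𝟙 b)) G).hom ≫ G ◁ adjB.counit.app (𝟙 b) ≫ (ρ_ G).hom)

/-- If postcomposition with `G` on `Hom(b,a)` and on `Hom(a,a)` admits right adjoints `h_b`
and `h_a`, and the canonical 2-morphism `G ≫ h_b(𝟙 b) ⟶ h_a(G)` induces a bijection on
2-morphisms out of `𝟙 a`, then `G` admits a right adjoint `h_b(𝟙 b)` in the bicategory,
with counit the counit of `g_b ⊣ h_b` at `𝟙 b` and unit corresponding to the unit of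
`g_a ⊣ h_a` at `𝟙 a`. -/
theorem right_adjoint_of_pointwise_criterion {a b : B} (G : a ⟶ b)
    (hB : (b ⟶ b) ⥤ (b ⟶ a)) (adjB : Bicategory.postcomp b G ⊣ hB)
    (hA : (a ⟶ b) ⥤ (a ⟶ a)) (adjA : Bicategory.postcomp a G ⊣ hA)
    (hbij : Function.Bijective
      (fun θ : 𝟙 a ⟶ G ≫ hB.obj (𝟙 b) => θ ≫ canonicalComparison G hB adjB hA adjA)) :
    ∃ adj : Bicategory.Adjunction G (hB.obj (𝟙 b)),
      adj.counit = adjB.counit.app (𝟙 b) ∧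
      adj.unit ≫ canonicalComparison G hB adjB hA adjA =
        adjA.unit.app (𝟙 a) ≫ hA.map (λ_ G).hom := by
  set H : b ⟶ a := hB.obj (𝟙 b) with hH
  set ε' : H ≫ G ⟶ 𝟙 b := adjB.counit.app (𝟙 b) with hε'
  set c : G ≫ H ⟶ hA.obj G := canonicalComparison G hB adjB hA adjA with hc
  obtain ⟨η, hη⟩ := hbij.2 (adjA.unit.app (𝟙 a) ≫ hA.map (λ_ G).hom)
  dsimp only at hη
  -- the left triangle
  have hleft : leftZigzag η ε' = (λ_ G).hom ≫ (ρ_ G).inv := by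
    have h1 : leftZigzag η ε' ≫ (ρ_ G).hom =
        (Bicategory.postcomp a G).map η ≫
          ((α_ G H G).hom ≫ G ◁ ε' ≫ (ρ_ G).hom) := by
      dsimp only [leftZigzag]
      change (η ▷ G ⊗≫ G ◁ ε') ≫ (ρ_ G).hom = η ▷ G ≫ (α_ G H G).hom ≫ G ◁ ε' ≫ (ρ_ G).hom
      bicategory
    have h2 : adjA.homEquiv (𝟙 a) G (leftZigzag η ε' ≫ (ρ_ G).hom) =
        adjA.homEquiv (𝟙 a) G ((λ_ G).hom) := by
      erw [h1, CategoryTheory.Adjunction.homEquiv_naturality_left]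
      have hc' : adjA.homEquiv (G ≫ H) G
          ((α_ G H G).hom ≫ G ◁ ε' ≫ (ρ_ G).hom) = c := rfl
      rw [hc', hη]; erw [CategoryTheory.Adjunction.homEquiv_unit]
    have h3 := (adjA.homEquiv (𝟙 a) G).injective h2
    rw [← h3]
    bicategory
  -- the right triangle, derived from the left one
  have hright : rightZigzag η ε' = (ρ_ H).hom ≫ (λ_ H).inv := by
    have h0 : (ρ_ H).inv ≫ rightZigzag η ε' ≫ (λ_ H).hom = 𝟙 H := by
      apply (adjB.homEquiv H (𝟙 b)).symm.injective
      rw [CategoryTheory.Adjunction.homEquiv_counit,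
        CategoryTheory.Adjunction.homEquiv_counit]
      change ((ρ_ H).inv ≫ rightZigzag η ε' ≫ (λ_ H).hom) ▷ G ≫ adjB.counit.app (𝟙 b) =
        𝟙 H ▷ G ≫ adjB.counit.app (𝟙 b)
      simp only [Bicategory.id_whiskerRight, Category.id_comp]
      calc ((ρ_ H).inv ≫ rightZigzag η ε' ≫ (λ_ H).hom) ▷ G ≫ ε'
          = 𝟙 _ ⊗≫ H ◁ η ▷ G ⊗≫ (ε' ▷ (H ≫ G) ≫ 𝟙 b ◁ ε') ⊗≫ 𝟙 _ := by
            dsimp only [rightZigzag]; bicategory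
        _ = 𝟙 _ ⊗≫ H ◁ η ▷ G ⊗≫ ((H ≫ G) ◁ ε' ≫ ε' ▷ 𝟙 b) ⊗≫ 𝟙 _ := by
            rw [whisker_exchange]
        _ = 𝟙 _ ⊗≫ H ◁ (leftZigzag η ε') ⊗≫ ε' ⊗≫ 𝟙 _ := by
            dsimp only [leftZigzag]; bicategory
        _ = ε' := by rw [hleft]; bicategory
        _ = 𝟙 (H ≫ G) ≫ adjB.counit.app (𝟙 b) := by rw [hε']; erw [Category.id_comp]
    calc rightZigzag η ε'
        = (ρ_ H).hom ≫ ((ρ_ H).inv ≫ rightZigzag η ε' ≫ (λ_ H).hom) ≫ (λ_ H).inv := by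
          simp
          rfl
      _ = (ρ_ H).hom ≫ (λ_ H).inv := by rw [h0]; simp
  exact ⟨⟨η, ε', hleft, hright⟩, rfl, hη⟩
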